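/- For all integers n ≥ 1 and k ≥ 1, the number of non-decreasing parking functions of length n with all values at most k equals the number of 132-avoiding permutations σ of {1,…,n} with mmp(0,k,0,0)(σ) = 0. -/

import Mathlib

/-- A permutation `σ` of `{1,…,n}` (as a permutation of `Fin n`) avoids the pattern 132 if
there are no indices `i < j < k` with `σ i < σ k < σ j`. -/
def Avoids132 (n : ℕ) (σ : Equiv.Perm (Fin n)) : Prop :=
  ∀ i j k : Fin n, i < j → j < k → ¬(σ i < σ k ∧ σ k < σ j)

/-- `mmp n a b c d σ` is the number of indices `i` matching the marked mesh pattern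
`MMP(a,b,c,d)` in `σ`: there are at least `a` indices `j > i` with `σ j > σ i`,
at least `b` indices `j < i` with `σ j > σ i`, at least `c` indices `j < i` with
`σ j < σ i`, and at least `d` indices `j > i` with `σ j < σ i`. -/
noncomputable def mmp (n a b c d : ℕ) (σ : Equiv.Perm (Fin n)) : ℕ :=
  Nat.card {i : Fin n |
    a ≤ Nat.card {j : Fin n | i < j ∧ σ i < σ j} ∧
    b ≤ Nat.card {j : Fin n | j < i ∧ σ i < σ j} ∧
    c ≤ Nat.card {j : Fin n | j < i ∧ σ j < σ i} ∧
    d ≤ Nat.card {j : Fin n | i < j ∧ σ j < σ i}}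

/-- A non-decreasing parking function of length `n`, written as `f : Fin n → ℕ` (0-based
positions, values in `{1,…,n}`): `f` is weakly increasing and `1 ≤ f i ≤ i + 1` for all
`i` (in 1-based terms, `f(i) ≤ i`, which also forces the values to lie in `{1,…,n}`). -/
def NDParking (n : ℕ) (f : Fin n → ℕ) : Prop :=
  Monotone f ∧ ∀ i : Fin n, 1 ≤ f i ∧ f i ≤ (i : ℕ) + 1

noncomputable def bc {n : ℕ} (σ : Equiv.Perm (Fin n)) (i : Fin n) : ℕ :=
  Nat.card {j : Fin n | j < i ∧ σ i < σ j}

lemma mmp_zero_iff (n k : ℕ) (σ : Equiv.Perm (Fin n)) :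
    mmp n 0 k 0 0 σ = 0 ↔ ∀ i, bc σ i < k := by
  rw [mmp, Nat.card_eq_zero]
  have : ¬ Infinite ↥{i : Fin n |
    0 ≤ Nat.card {j : Fin n | i < j ∧ σ i < σ j} ∧
    k ≤ Nat.card {j : Fin n | j < i ∧ σ i < σ j} ∧
    0 ≤ Nat.card {j : Fin n | j < i ∧ σ j < σ i} ∧
    0 ≤ Nat.card {j : Fin n | i < j ∧ σ j < σ i}} := by
    exact not_infinite_iff_finite.mpr (Set.toFinite _)
  simp only [or_iff_left this, isEmpty_subtype]
  constructor
  · intro h i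
    have := h i
    simp only [Set.mem_setOf_eq, Nat.zero_le, true_and, and_true] at this
    exact lt_of_not_ge (by simpa [bc] using this)
  · intro h i
    simp only [Set.mem_setOf_eq, Nat.zero_le, true_and, and_true]
    exact not_le_of_gt (h i)

lemma bc_eq_filter {n : ℕ} (σ : Equiv.Perm (Fin n)) (i : Fin n) :
    bc σ i = Finset.card (Finset.univ.filter (fun j : Fin n => j < i ∧ σ i < σ j)) := by
  classical
  rw [bc, Nat.card_eq_fintype_card]
  convert Fintype.card_subtype (fun j : Fin n => j < i ∧ σ i < σ j)
  exact Iff.rfl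

open Equiv Finset

def pglueAux (n m : ℕ) (u : Fin m → ℕ) (w : Fin (n - m) → ℕ) (x : ℕ) : ℕ :=
  if h1 : x = 0 then 1
  else if h2 : x ≤ m then u ⟨x - 1, by omega⟩
  else if h3 : x ≤ n then m + 1 + w ⟨x - (m + 1), by omega⟩
  else 0

def pglue (n m : ℕ) (u : Fin m → ℕ) (w : Fin (n - m) → ℕ) :
    Fin (n+1) → ℕ :=
  fun i => pglueAux n m u w (i : ℕ)

lemma pglueAux_one (n m : ℕ) (u : Fin m → ℕ) (w : Fin (n - m) → ℕ) {x : ℕ}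
    (h : x = 0) : pglueAux n m u w x = 1 := by
  unfold pglueAux
  rw [dif_pos h]

lemma pglueAux_u (n m : ℕ) (u : Fin m → ℕ) (w : Fin (n - m) → ℕ) {x : ℕ}
    (h1 : x ≠ 0) (h2 : x ≤ m) (h3 : x - 1 < m) :
    pglueAux n m u w x = u ⟨x - 1, h3⟩ := by
  unfold pglueAux
  rw [dif_neg h1, dif_pos h2]

lemma pglueAux_w (n m : ℕ) (u : Fin m → ℕ) (w : Fin (n - m) → ℕ) {x : ℕ}
    (h2 : ¬ x ≤ m) (h3 : x ≤ n) (h4 : x - (m + 1) < n - m) :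
    pglueAux n m u w x = m + 1 + w ⟨x - (m + 1), h4⟩ := by
  unfold pglueAux
  rw [dif_neg (by omega : ¬ x = 0), dif_neg h2, dif_pos h3]

lemma pglue_apply (n m : ℕ) (u : Fin m → ℕ) (w : Fin (n - m) → ℕ) (i : Fin (n+1)) :
    pglue n m u w i = pglueAux n m u w (i : ℕ) := rfl

lemma pglue_mem (n k m : ℕ) (hk : 1 ≤ k)
    (u : Fin m → ℕ) (w : Fin (n - m) → ℕ)
    (hu : NDParking m u ∧ ∀ i, u i ≤ k)
    (hw : NDParking (n - m) w ∧ ∀ i, w i ≤ k - (m + 1)) :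
    NDParking (n+1) (pglue n m u w) ∧ ∀ i, pglue n m u w i ≤ k := by
  obtain ⟨⟨humono, hub⟩, huk⟩ := hu
  obtain ⟨⟨hwmono, hwb⟩, hwk⟩ := hw
  refine ⟨⟨?_, ?_⟩, ?_⟩
  · intro a b hab
    have hab' : (a : ℕ) ≤ (b : ℕ) := hab
    have han := a.isLt
    have hbn := b.isLt
    unfold pglue pglueAux
    split_ifs
    all_goals
      first
      | omega
      | (have h01 := (hub ⟨(b:ℕ) - 1, by omega⟩).1; omega)
      | (have huu := humono (show (⟨(a:ℕ)-1, by omega⟩ : Fin m) ≤ ⟨(b:ℕ)-1, by omega⟩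
            from by simp only [Fin.mk_le_mk]; omega); omega)
      | (have h1' := (hub ⟨(a:ℕ)-1, by omega⟩).2
         have h2' := (hwb ⟨(b:ℕ)-(m+1), by omega⟩).1
         simp only [Fin.val_mk] at h1'
         omega)
      | (have hww := hwmono (show (⟨(a:ℕ)-(m+1), by omega⟩ : Fin (n-m)) ≤
            ⟨(b:ℕ)-(m+1), by omega⟩ from by simp only [Fin.mk_le_mk]; omega); omega)
  · intro i
    have hin := i.isLt
    unfold pglue pglueAux
    split_ifs
    all_goals
      first
      | omega
      | (have ha := (hub ⟨(i : ℕ) - 1, by omega⟩).1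
         have hb := (hub ⟨(i : ℕ) - 1, by omega⟩).2
         simp only [Fin.val_mk] at ha hb
         omega)
      | (have ha := (hwb ⟨(i : ℕ) - (m + 1), by omega⟩).1
         have hb := (hwb ⟨(i : ℕ) - (m + 1), by omega⟩).2
         simp only [Fin.val_mk] at ha hb
         omega)
  · intro i
    have hin := i.isLt
    unfold pglue pglueAux
    split_ifs
    all_goals
      first
      | omega
      | exact huk _
      | (have ha := (hwb ⟨(i : ℕ) - (m + 1), by omega⟩).1
         have hb := hwk ⟨(i : ℕ) - (m + 1), by omega⟩
         omega)

lemma park_decomp (n k : ℕ) (f : Fin (n+1) → ℕ)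
    (hf : NDParking (n+1) f ∧ ∀ i, f i ≤ k) :
    ∃ m : ℕ, m ≤ n ∧ ∃ u : Fin m → ℕ, ∃ w : Fin (n - m) → ℕ,
      (NDParking m u ∧ ∀ i, u i ≤ k) ∧
      (NDParking (n - m) w ∧ ∀ i, w i ≤ k - (m+1)) ∧
      pglue n m u w = f := by
  classical
  set g : ℕ → ℕ := fun x => if h : x < n+1 then f ⟨x, h⟩ else 0 with hgdef
  have hgf : ∀ i : Fin (n+1), f i = g (i:ℕ) := by
    intro i
    simp only [hgdef, i.isLt, dif_pos, Fin.eta]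
  have hgmono : ∀ x y : ℕ, x ≤ y → y ≤ n → g x ≤ g y := by
    intro x y hxy hy
    have h := hf.1.1 (show (⟨x, by omega⟩ : Fin (n+1)) ≤ ⟨y, by omega⟩ by
      simp only [Fin.mk_le_mk]; omega)
    simp only [hgdef, show x < n+1 by omega, show y < n+1 by omega, dif_pos]
    exact h
  have hg1 : ∀ x : ℕ, x ≤ n → 1 ≤ g x := by
    intro x hx
    have := (hf.1.2 ⟨x, by omega⟩).1
    simpa only [hgdef, show x < n+1 by omega, dif_pos] using this
  have hg2 : ∀ x : ℕ, x ≤ n → g x ≤ x + 1 := by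
    intro x hx
    have := (hf.1.2 ⟨x, by omega⟩).2
    simpa only [hgdef, show x < n+1 by omega, dif_pos] using this
  have hgk : ∀ x : ℕ, x ≤ n → g x ≤ k := by
    intro x hx
    have := hf.2 ⟨x, by omega⟩
    simpa only [hgdef, show x < n+1 by omega, dif_pos] using this
  have key : ∃ m : ℕ, m ≤ n ∧ (∀ x : ℕ, 1 ≤ x → x ≤ m → g x ≤ x) ∧
      (m < n → g (m+1) = m+2) := by
    by_cases hex : ∃ x : ℕ, x ≤ n ∧ 1 ≤ x ∧ g x = x + 1
    · have hsp := Nat.find_spec hex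
      have h1 : 1 ≤ Nat.find hex := hsp.2.1
      refine ⟨Nat.find hex - 1, by omega, ?_, ?_⟩
      · intro x hx1 hx2
        have hne := Nat.find_min hex (m := x) (by omega)
        have hle : g x ≤ x + 1 := hg2 x (by omega)
        have : ¬ (x ≤ n ∧ 1 ≤ x ∧ g x = x + 1) := hne
        have hxn : x ≤ n := by omega
        omega
      · intro hmn
        have : Nat.find hex - 1 + 1 = Nat.find hex := by omega
        rw [this]
        omega
    · push_neg at hex
      refine ⟨n, le_refl _, ?_, ?_⟩
      · intro x hx1 hx2
        have := hex x hx2 hx1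
        have := hg2 x hx2
        omega
      · omega
  obtain ⟨m, hmle, hB, hC⟩ := key
  refine ⟨m, hmle, fun t => g ((t:ℕ)+1), fun j => g (m+1+(j:ℕ)) - (m+1), ?_, ?_, ?_⟩
  · refine ⟨⟨?_, ?_⟩, ?_⟩
    · intro a b hab
      exact hgmono _ _ (by have : (a:ℕ) ≤ (b:ℕ) := hab; omega) (by have := b.isLt; omega)
    · intro t
      show 1 ≤ g ((t:ℕ)+1) ∧ g ((t:ℕ)+1) ≤ (t:ℕ) + 1
      have ht := t.isLt
      have ha := hg1 ((t:ℕ)+1) (by omega)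
      have hb := hB ((t:ℕ)+1) (by omega) (by omega)
      omega
    · intro t
      have ht := t.isLt
      exact hgk _ (by omega)
  · refine ⟨⟨?_, ?_⟩, ?_⟩
    · intro a b hab
      have ha := a.isLt
      have hb := b.isLt
      exact Nat.sub_le_sub_right
        (hgmono _ _ (by have : (a:ℕ) ≤ (b:ℕ) := hab; omega) (by omega)) _
    · intro j
      show 1 ≤ g (m+1+(j:ℕ)) - (m+1) ∧ g (m+1+(j:ℕ)) - (m+1) ≤ (j:ℕ) + 1
      have hj := j.isLt
      have hmlt : m < n := by omega
      have hCv := hC hmlt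
      have hmono := hgmono (m+1) (m+1+(j:ℕ)) (by omega) (by omega)
      have hub := hg2 (m+1+(j:ℕ)) (by omega)
      omega
    · intro j
      show g (m+1+(j:ℕ)) - (m+1) ≤ k - (m+1)
      have hj := j.isLt
      have hmlt : m < n := by omega
      have hCv := hC hmlt
      have hmono := hgmono (m+1) (m+1+(j:ℕ)) (by omega) (by omega)
      have hk := hgk (m+1+(j:ℕ)) (by omega)
      omega
  · funext i
    rw [hgf i]
    have hin := i.isLt
    unfold pglue pglueAux
    split_ifs with h1 h2
    · rw [h1]
      have := hg1 0 (by omega)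
      have := hg2 0 (by omega)
      omega
    · show g ((i:ℕ) - 1 + 1) = g (i:ℕ)
      congr 1
      omega
    · show m + 1 + (g (m+1+((i:ℕ)-(m+1))) - (m+1)) = g (i:ℕ)
      have hidx : m+1+((i:ℕ)-(m+1)) = (i:ℕ) := by omega
      rw [hidx]
      have hmlt : m < n := by omega
      have hCv := hC hmlt
      have hmono := hgmono (m+1) (i:ℕ) (by omega) (by omega)
      omega
    · omega

lemma pglue_ne (n m m' : ℕ) (hmm : m < m') (hm' : m' ≤ n)
    (u : Fin m → ℕ) (w : Fin (n - m) → ℕ) (u' : Fin m' → ℕ) (w' : Fin (n - m') → ℕ)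
    (hub : ∀ t : Fin m', u' t ≤ (t:ℕ) + 1) (hw1 : ∀ j, 1 ≤ w j) :
    pglue n m u w ≠ pglue n m' u' w' := by
  intro h
  have hpt := congrFun h ⟨m+1, by omega⟩
  rw [pglue_apply, pglue_apply] at hpt
  rw [pglueAux_w n m u w (by simp only [Fin.val_mk]; omega) (by simp only [Fin.val_mk]; omega)
      (by simp only [Fin.val_mk]; omega)] at hpt
  rw [pglueAux_u n m' u' w' (by simp only [Fin.val_mk]; omega) (by simp only [Fin.val_mk]; omega)
      (by simp only [Fin.val_mk]; omega)] at hpt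
  have h1 := hw1 ⟨((⟨m+1, by omega⟩ : Fin (n+1)) : ℕ) - (m+1), by simp only [Fin.val_mk]; omega⟩
  have h2 := hub ⟨((⟨m+1, by omega⟩ : Fin (n+1)) : ℕ) - 1, by simp only [Fin.val_mk]; omega⟩
  simp only [Fin.val_mk] at hpt h1 h2
  omega

lemma park_finite (N k : ℕ) : ({f : Fin N → ℕ | NDParking N f ∧ ∀ i, f i ≤ k}).Finite := by
  apply Set.Finite.subset (Set.Finite.pi (fun _ : Fin N => Set.finite_Iic N))
  intro f hfm
  simp only [Set.mem_pi, Set.mem_univ, Set.mem_Iic, forall_true_left]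
  intro i
  have := (hfm.1.2 i).2
  have := i.isLt
  omega

lemma nat_card_sigma {ι : Type} [Fintype ι] (g : ι → Type) [∀ i, Finite (g i)] :
    Nat.card (Σ i, g i) = ∑ i : ι, Nat.card (g i) := by
  classical
  letI := fun i => Fintype.ofFinite (g i)
  simp only [Nat.card_eq_fintype_card, Fintype.card_sigma]

lemma parkRec (n k : ℕ) (hk : 1 ≤ k) :
    Nat.card {f : Fin (n+1) → ℕ | NDParking (n+1) f ∧ ∀ i, f i ≤ k} =
    ∑ m : Fin (n+1),
      (Nat.card {u : Fin (m:ℕ) → ℕ | NDParking (m:ℕ) u ∧ ∀ i, u i ≤ k}) *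
      (Nat.card {w : Fin (n-(m:ℕ)) → ℕ |
        NDParking (n-(m:ℕ)) w ∧ ∀ i, w i ≤ k - ((m:ℕ)+1)}) := by
  classical
  haveI hfin1 : ∀ m : Fin (n+1),
      Finite ↥{u : Fin (m:ℕ) → ℕ | NDParking (m:ℕ) u ∧ ∀ i, u i ≤ k} :=
    fun m => (park_finite _ _).to_subtype
  haveI hfin2 : ∀ m : Fin (n+1),
      Finite ↥{w : Fin (n-(m:ℕ)) → ℕ | NDParking (n-(m:ℕ)) w ∧ ∀ i, w i ≤ k - ((m:ℕ)+1)} :=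
    fun m => (park_finite _ _).to_subtype
  set Fib : Fin (n+1) → Type := fun m =>
    ↥{u : Fin (m:ℕ) → ℕ | NDParking (m:ℕ) u ∧ ∀ i, u i ≤ k} ×
    ↥{w : Fin (n-(m:ℕ)) → ℕ | NDParking (n-(m:ℕ)) w ∧ ∀ i, w i ≤ k - ((m:ℕ)+1)} with hFib
  have hG : Function.Bijective (fun x : Σ m : Fin (n+1), Fib m =>
      (⟨pglue n (x.1:ℕ) x.2.1.1 x.2.2.1,
        pglue_mem n k (x.1:ℕ) hk x.2.1.1 x.2.2.1 x.2.1.2 x.2.2.2⟩ :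
        ↥{f : Fin (n+1) → ℕ | NDParking (n+1) f ∧ ∀ i, f i ≤ k})) := by
    constructor
    · rintro ⟨m, ⟨u, hu⟩, ⟨w, hw⟩⟩ ⟨m', ⟨u', hu'⟩, ⟨w', hw'⟩⟩ h
      simp only [Subtype.mk.injEq] at h
      have hmm : (m:ℕ) = (m':ℕ) := by
        by_contra hne
        rcases Nat.lt_or_ge (m:ℕ) (m':ℕ) with hlt | hge
        · exact pglue_ne n (m:ℕ) (m':ℕ) hlt (by have := m'.isLt; omega) u w u' w'
            (fun t => (hu'.1.2 t).2) (fun j => (hw.1.2 j).1) h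
        · exact pglue_ne n (m':ℕ) (m:ℕ) (by omega) (by have := m.isLt; omega) u' w' u w
            (fun t => (hu.1.2 t).2) (fun j => (hw'.1.2 j).1) h.symm
      have hmm' : m = m' := Fin.ext hmm
      subst hmm'
      have huu : u = u' := by
        funext t
        have ht := t.isLt
        have hmn := m.isLt
        have hpt := congrFun h ⟨(t:ℕ)+1, by omega⟩
        rw [pglue_apply, pglue_apply,
          pglueAux_u n (m:ℕ) u w (by simp only [Fin.val_mk]; omega)
            (by simp only [Fin.val_mk]; omega) (by simp only [Fin.val_mk]; omega),
          pglueAux_u n (m:ℕ) u' w' (by simp only [Fin.val_mk]; omega)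
            (by simp only [Fin.val_mk]; omega) (by simp only [Fin.val_mk]; omega)] at hpt
        have hidx : (⟨((⟨(t:ℕ)+1, by omega⟩ : Fin (n+1)) : ℕ) - 1,
            by simp only [Fin.val_mk]; omega⟩ : Fin (m:ℕ)) = t :=
          Fin.ext (by simp only [Fin.val_mk]; omega)
        rwa [hidx] at hpt
      have hww : w = w' := by
        funext j
        have hj := j.isLt
        have hmn := m.isLt
        have hpt := congrFun h ⟨(m:ℕ)+1+(j:ℕ), by omega⟩
        rw [pglue_apply, pglue_apply,
          pglueAux_w n (m:ℕ) u w (by simp only [Fin.val_mk]; omega)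
            (by simp only [Fin.val_mk]; omega) (by simp only [Fin.val_mk]; omega),
          pglueAux_w n (m:ℕ) u' w' (by simp only [Fin.val_mk]; omega)
            (by simp only [Fin.val_mk]; omega) (by simp only [Fin.val_mk]; omega)] at hpt
        have hidx : (⟨((⟨(m:ℕ)+1+(j:ℕ), by omega⟩ : Fin (n+1)) : ℕ) - ((m:ℕ)+1),
            by simp only [Fin.val_mk]; omega⟩ : Fin (n-(m:ℕ))) = j :=
          Fin.ext (by simp only [Fin.val_mk]; omega)
        rw [hidx] at hpt
        omega
      subst huu
      subst hww
      rfl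
    · rintro ⟨f, hf⟩
      obtain ⟨m, hm, u, w, hu, hw, hglue⟩ := park_decomp n k f hf
      exact ⟨⟨⟨m, by omega⟩, (⟨u, hu⟩, ⟨w, hw⟩)⟩, Subtype.ext hglue⟩
  rw [← Nat.card_eq_of_bijective _ hG, nat_card_sigma]
  refine Finset.sum_congr rfl (fun m _ => ?_)
  rw [hFib, Nat.card_prod]

def posE (n m : ℕ) (hm : m ≤ n) : (Fin m ⊕ (Fin 1 ⊕ Fin (n-m))) ≃ Fin (n+1) :=
  (Equiv.sumCongr (Equiv.refl (Fin m)) finSumFinEquiv).trans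
    (finSumFinEquiv.trans (finCongr (by omega)))

def valE (n m : ℕ) (hm : m ≤ n) : (Fin (n-m) ⊕ (Fin m ⊕ Fin 1)) ≃ Fin (n+1) :=
  (Equiv.sumCongr (Equiv.refl (Fin (n-m))) finSumFinEquiv).trans
    (finSumFinEquiv.trans (finCongr (by omega)))

def permGlue (n m : ℕ) (hm : m ≤ n) (α : Equiv.Perm (Fin m)) (β : Equiv.Perm (Fin (n-m))) :
    Equiv.Perm (Fin (n+1)) :=
  (posE n m hm).symm.trans
    ((Equiv.sumCongr α (Equiv.sumCongr (Equiv.refl (Fin 1)) β)).trans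
      (((Equiv.sumAssoc (Fin m) (Fin 1) (Fin (n-m))).symm.trans
        (Equiv.sumComm (Fin m ⊕ Fin 1) (Fin (n-m)))).trans (valE n m hm)))

lemma posE_inl (n m : ℕ) (hm : m ≤ n) (i : Fin m) :
    ((posE n m hm (Sum.inl i)) : ℕ) = (i : ℕ) := by
  simp [posE]

lemma posE_mid (n m : ℕ) (hm : m ≤ n) (z : Fin 1) :
    ((posE n m hm (Sum.inr (Sum.inl z))) : ℕ) = m := by
  simp [posE]
  all_goals omega

lemma posE_inr (n m : ℕ) (hm : m ≤ n) (j : Fin (n-m)) :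
    ((posE n m hm (Sum.inr (Sum.inr j))) : ℕ) = m + 1 + (j : ℕ) := by
  simp [posE]
  all_goals omega

lemma valE_inl (n m : ℕ) (hm : m ≤ n) (j : Fin (n-m)) :
    ((valE n m hm (Sum.inl j)) : ℕ) = (j : ℕ) := by
  simp [valE]

lemma valE_mid (n m : ℕ) (hm : m ≤ n) (i : Fin m) :
    ((valE n m hm (Sum.inr (Sum.inl i))) : ℕ) = (n - m) + (i : ℕ) := by
  simp [valE]

lemma valE_inr (n m : ℕ) (hm : m ≤ n) (z : Fin 1) :
    ((valE n m hm (Sum.inr (Sum.inr z))) : ℕ) = n := by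
  simp [valE]
  all_goals omega

lemma permGlue_lt (n m : ℕ) (hm : m ≤ n) (α : Equiv.Perm (Fin m)) (β : Equiv.Perm (Fin (n-m)))
    (i : Fin (n+1)) (h : (i : ℕ) < m) :
    ((permGlue n m hm α β i) : ℕ) = (n - m) + ((α ⟨(i:ℕ), h⟩ : Fin m) : ℕ) := by
  have hsym : (posE n m hm).symm i = Sum.inl ⟨(i:ℕ), h⟩ := by
    rw [Equiv.symm_apply_eq]
    exact Fin.ext (by rw [posE_inl])
  unfold permGlue
  simp only [Equiv.trans_apply, hsym, Equiv.sumCongr_apply, Sum.map_inl,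
    Equiv.sumAssoc, Equiv.sumComm, Equiv.coe_fn_symm_mk, Equiv.coe_fn_mk,
    Sum.elim_inl, Sum.elim_inr, Function.comp_apply, Sum.swap_inl, Sum.swap_inr, Sum.swap]
  rw [valE_mid]

lemma permGlue_eq (n m : ℕ) (hm : m ≤ n) (α : Equiv.Perm (Fin m)) (β : Equiv.Perm (Fin (n-m)))
    (i : Fin (n+1)) (h : (i : ℕ) = m) :
    ((permGlue n m hm α β i) : ℕ) = n := by
  have hsym : (posE n m hm).symm i = Sum.inr (Sum.inl ⟨0, by omega⟩) := by
    rw [Equiv.symm_apply_eq]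
    exact Fin.ext (by rw [posE_mid]; omega)
  unfold permGlue
  simp only [Equiv.trans_apply, hsym, Equiv.sumCongr_apply, Sum.map_inr, Sum.map_inl,
    Equiv.sumAssoc, Equiv.sumComm, Equiv.coe_fn_symm_mk, Equiv.coe_fn_mk, Equiv.refl_apply,
    Sum.elim_inl, Sum.elim_inr, Function.comp_apply, Sum.swap_inl, Sum.swap_inr, Sum.swap]
  rw [valE_inr]

lemma permGlue_gt (n m : ℕ) (hm : m ≤ n) (α : Equiv.Perm (Fin m)) (β : Equiv.Perm (Fin (n-m)))
    (i : Fin (n+1)) (h : m < (i : ℕ)) :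
    ((permGlue n m hm α β i) : ℕ) = ((β ⟨(i:ℕ) - (m+1), by have := i.isLt; omega⟩ : Fin (n-m)) : ℕ) := by
  have hsym : (posE n m hm).symm i = Sum.inr (Sum.inr ⟨(i:ℕ) - (m+1), by have := i.isLt; omega⟩) := by
    rw [Equiv.symm_apply_eq]
    exact Fin.ext (by rw [posE_inr]; simp only [Fin.val_mk]; have := i.isLt; omega)
  unfold permGlue
  simp only [Equiv.trans_apply, hsym, Equiv.sumCongr_apply, Sum.map_inr,
    Equiv.sumAssoc, Equiv.sumComm, Equiv.coe_fn_symm_mk, Equiv.coe_fn_mk,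
    Sum.elim_inl, Sum.elim_inr, Function.comp_apply, Sum.swap_inl, Sum.swap_inr, Sum.swap]
  rw [valE_inl]

open Finset

def bcF {N : ℕ} (σ : Equiv.Perm (Fin N)) (i : Fin N) : ℕ :=
  (Finset.univ.filter (fun j : Fin N => j < i ∧ σ i < σ j)).card

lemma card_filter_val_lt (N t : ℕ) (ht : t ≤ N) :
    ((Finset.univ : Finset (Fin N)).filter (fun j : Fin N => (j:ℕ) < t)).card = t := by
  have hmap : ((Finset.univ : Finset (Fin N)).filter (fun j : Fin N => (j:ℕ) < t)) =
      Finset.map ⟨Fin.castLE ht, Fin.castLE_injective ht⟩ Finset.univ := by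
    ext j
    simp only [Finset.mem_filter, Finset.mem_univ, true_and, Finset.mem_map,
      Function.Embedding.coeFn_mk]
    constructor
    · intro hj
      exact ⟨⟨(j:ℕ), hj⟩, Fin.ext rfl⟩
    · rintro ⟨x, rfl⟩
      exact x.isLt
  rw [hmap, Finset.card_map, Finset.card_univ, Fintype.card_fin]

lemma card_filter_val_ge (N t : ℕ) (ht : t ≤ N) :
    ((Finset.univ : Finset (Fin N)).filter (fun j : Fin N => t ≤ (j:ℕ))).card = N - t := by
  have h := Finset.card_filter_add_card_filter_not
    (s := (Finset.univ : Finset (Fin N))) (p := fun j : Fin N => (j:ℕ) < t)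
  have h2 : (Finset.univ.filter (fun j : Fin N => ¬ (j:ℕ) < t)) =
      (Finset.univ.filter (fun j : Fin N => t ≤ (j:ℕ))) := by
    ext j
    simp only [Finset.mem_filter, Finset.mem_univ, true_and]
    omega
  rw [h2, card_filter_val_lt N t ht] at h
  rw [Finset.card_univ, Fintype.card_fin] at h
  omega

def embLow (n m : ℕ) (hm : m ≤ n) : Fin m ↪ Fin (n+1) :=
  ⟨fun t => ⟨(t:ℕ), by have := t.isLt; omega⟩, by
    intro a b hab
    simp only [Fin.mk.injEq] at hab
    exact Fin.ext hab⟩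

def embHigh (n m : ℕ) : Fin (n-m) ↪ Fin (n+1) :=
  ⟨fun t => ⟨m + 1 + (t:ℕ), by have := t.isLt; omega⟩, by
    intro a b hab
    simp only [Fin.mk.injEq] at hab
    exact Fin.ext (by omega)⟩

lemma bcF_glue_lt (n m : ℕ) (hm : m ≤ n) (α : Equiv.Perm (Fin m)) (β : Equiv.Perm (Fin (n-m)))
    (i : Fin (n+1)) (h : (i : ℕ) < m) :
    bcF (permGlue n m hm α β) i = bcF α ⟨(i:ℕ), h⟩ := by
  have hmap : (Finset.univ.filter (fun j : Fin (n+1) =>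
      j < i ∧ permGlue n m hm α β i < permGlue n m hm α β j)) =
      Finset.map (embLow n m hm)
      (Finset.univ.filter (fun t : Fin m =>
        t < ⟨(i:ℕ), h⟩ ∧ α ⟨(i:ℕ), h⟩ < α t)) := by
    ext j
    simp only [Finset.mem_filter, Finset.mem_univ, true_and, Finset.mem_map,
      embLow, Function.Embedding.coeFn_mk]
    constructor
    · rintro ⟨hji, hgl⟩
      have hji' : (j:ℕ) < (i:ℕ) := hji
      have hjm : (j:ℕ) < m := by omega
      refine ⟨⟨(j:ℕ), hjm⟩, ⟨Fin.mk_lt_mk.mpr hji', ?_⟩, Fin.ext rfl⟩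
      have hv : ((permGlue n m hm α β i) : ℕ) < ((permGlue n m hm α β j) : ℕ) := hgl
      rw [permGlue_lt n m hm α β i h, permGlue_lt n m hm α β j hjm] at hv
      exact Fin.lt_def.mpr (by omega)
    · rintro ⟨t, ⟨hti, hat⟩, rfl⟩
      have ht : (t:ℕ) < m := t.isLt
      have hti' : (t:ℕ) < (i:ℕ) := Fin.lt_def.mp hti
      refine ⟨Fin.lt_def.mpr hti', ?_⟩
      refine Fin.lt_def.mpr ?_
      show ((permGlue n m hm α β i : Fin (n+1)) : ℕ) <
        ((permGlue n m hm α β (⟨(t:ℕ), by have := t.isLt; omega⟩ : Fin (n+1))) : ℕ)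
      rw [permGlue_lt n m hm α β i h,
        permGlue_lt n m hm α β (⟨(t:ℕ), by have := t.isLt; omega⟩ : Fin (n+1)) ht]
      have h1 : ((α ⟨(i:ℕ), h⟩ : Fin m) : ℕ) < ((α t : Fin m) : ℕ) := Fin.lt_def.mp hat
      have hteq : ((⟨((⟨(t:ℕ), by have := t.isLt; omega⟩ : Fin (n+1)) : ℕ), ht⟩ : Fin m)) = t :=
        Fin.ext rfl
      rw [hteq]
      omega
  unfold bcF
  rw [hmap, Finset.card_map]

lemma bcF_glue_eq (n m : ℕ) (hm : m ≤ n) (α : Equiv.Perm (Fin m)) (β : Equiv.Perm (Fin (n-m)))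
    (i : Fin (n+1)) (h : (i : ℕ) = m) :
    bcF (permGlue n m hm α β) i = 0 := by
  unfold bcF
  rw [Finset.card_eq_zero, Finset.filter_eq_empty_iff]
  intro j _
  rintro ⟨hji, hgl⟩
  have hv : ((permGlue n m hm α β i) : ℕ) < ((permGlue n m hm α β j) : ℕ) := hgl
  rw [permGlue_eq n m hm α β i h] at hv
  have := (permGlue n m hm α β j).isLt
  omega

lemma bcF_glue_gt (n m : ℕ) (hm : m ≤ n) (α : Equiv.Perm (Fin m)) (β : Equiv.Perm (Fin (n-m)))
    (i : Fin (n+1)) (h : m < (i : ℕ)) :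
    bcF (permGlue n m hm α β) i =
      (m + 1) + bcF β ⟨(i:ℕ) - (m+1), by have := i.isLt; omega⟩ := by
  have hin := i.isLt
  have hsplit : ((Finset.univ.filter (fun j : Fin (n+1) =>
        j < i ∧ permGlue n m hm α β i < permGlue n m hm α β j)).filter
          (fun j : Fin (n+1) => (j:ℕ) ≤ m)).card +
      ((Finset.univ.filter (fun j : Fin (n+1) =>
        j < i ∧ permGlue n m hm α β i < permGlue n m hm α β j)).filter
          (fun j : Fin (n+1) => ¬ (j:ℕ) ≤ m)).card = bcF (permGlue n m hm α β) i :=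
    Finset.card_filter_add_card_filter_not _
  have hbd : ((permGlue n m hm α β i) : ℕ) < n - m := by
    rw [permGlue_gt n m hm α β i h]
    exact (β _).isLt
  have hA : ((Finset.univ.filter (fun j : Fin (n+1) =>
      j < i ∧ permGlue n m hm α β i < permGlue n m hm α β j)).filter
        (fun j : Fin (n+1) => (j:ℕ) ≤ m)).card = m + 1 := by
    have heq : ((Finset.univ.filter (fun j : Fin (n+1) =>
        j < i ∧ permGlue n m hm α β i < permGlue n m hm α β j)).filter
          (fun j : Fin (n+1) => (j:ℕ) ≤ m)) =
        Finset.univ.filter (fun j : Fin (n+1) => (j:ℕ) < m + 1) := by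
      ext j
      simp only [Finset.mem_filter, Finset.mem_univ, true_and]
      constructor
      · rintro ⟨-, hjm⟩
        omega
      · intro hjm
        refine ⟨⟨Fin.lt_def.mpr (by omega), Fin.lt_def.mpr ?_⟩, by omega⟩
        rcases Nat.lt_or_ge (j:ℕ) m with hj | hj
        · rw [permGlue_lt n m hm α β j hj]
          omega
        · have hjm' : (j:ℕ) = m := by omega
          rw [permGlue_eq n m hm α β j hjm']
          omega
    rw [heq]
    exact card_filter_val_lt (n+1) (m+1) (by omega)
  have hB : ((Finset.univ.filter (fun j : Fin (n+1) =>
      j < i ∧ permGlue n m hm α β i < permGlue n m hm α β j)).filter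
        (fun j : Fin (n+1) => ¬ (j:ℕ) ≤ m)).card =
      bcF β ⟨(i:ℕ) - (m+1), by have := i.isLt; omega⟩ := by
    have hmap : ((Finset.univ.filter (fun j : Fin (n+1) =>
        j < i ∧ permGlue n m hm α β i < permGlue n m hm α β j)).filter
          (fun j : Fin (n+1) => ¬ (j:ℕ) ≤ m)) =
        Finset.map (embHigh n m)
        (Finset.univ.filter (fun t : Fin (n-m) =>
          t < ⟨(i:ℕ) - (m+1), by have := i.isLt; omega⟩ ∧
          β ⟨(i:ℕ) - (m+1), by have := i.isLt; omega⟩ < β t)) := by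
      ext j
      simp only [Finset.mem_filter, Finset.mem_univ, true_and, Finset.mem_map,
        embHigh, Function.Embedding.coeFn_mk]
      constructor
      · rintro ⟨⟨hji, hgl⟩, hjm⟩
        have hji' : (j:ℕ) < (i:ℕ) := hji
        have hjn := j.isLt
        have hidx : (j:ℕ) - (m+1) < n - m := by omega
        refine ⟨⟨(j:ℕ) - (m+1), hidx⟩, ⟨?_, ?_⟩, Fin.ext (by
          show m + 1 + ((j:ℕ) - (m+1)) = (j:ℕ); omega)⟩
        · exact Fin.lt_def.mpr (by show (j:ℕ) - (m+1) < (i:ℕ) - (m+1); omega)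
        · have hv : ((permGlue n m hm α β i) : ℕ) < ((permGlue n m hm α β j) : ℕ) := hgl
          rw [permGlue_gt n m hm α β i h, permGlue_gt n m hm α β j (by omega)] at hv
          exact Fin.lt_def.mpr hv
      · rintro ⟨t, ⟨hti, hbt⟩, rfl⟩
        have ht : (t:ℕ) < n - m := t.isLt
        have hti' : (t:ℕ) < (i:ℕ) - (m+1) := Fin.lt_def.mp hti
        refine ⟨⟨Fin.lt_def.mpr (by show m + 1 + (t:ℕ) < (i:ℕ); omega), ?_⟩,
          by show ¬ m + 1 + (t:ℕ) ≤ m; omega⟩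
        refine Fin.lt_def.mpr ?_
        show ((permGlue n m hm α β i : Fin (n+1)) : ℕ) <
          ((permGlue n m hm α β (⟨m + 1 + (t:ℕ), by have := t.isLt; omega⟩ : Fin (n+1))) : ℕ)
        rw [permGlue_gt n m hm α β i h,
          permGlue_gt n m hm α β (⟨m + 1 + (t:ℕ), by have := t.isLt; omega⟩ : Fin (n+1))
            (by show m < m + 1 + (t:ℕ); omega)]
        have hbt' : ((β ⟨(i:ℕ) - (m+1), by have := i.isLt; omega⟩ : Fin (n-m)) : ℕ) <
            ((β t : Fin (n-m)) : ℕ) := Fin.lt_def.mp hbt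
        have hteq : ((⟨((⟨m + 1 + (t:ℕ), by have := t.isLt; omega⟩ : Fin (n+1)) : ℕ) - (m + 1),
            by show m + 1 + (t:ℕ) - (m+1) < n - m; omega⟩ : Fin (n-m))) = t :=
          Fin.ext (by show m + 1 + (t:ℕ) - (m+1) = (t:ℕ); omega)
        rw [hteq]
        exact hbt'
    have hc := congrArg Finset.card hmap
    rw [Finset.card_map] at hc
    exact hc
  omega

lemma glue_val_low_bound (n m : ℕ) (hm : m ≤ n) (α : Equiv.Perm (Fin m))
    (β : Equiv.Perm (Fin (n-m))) (i : Fin (n+1)) (h : (i:ℕ) < m) :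
    n - m ≤ ((permGlue n m hm α β i) : ℕ) ∧ ((permGlue n m hm α β i) : ℕ) ≤ n - 1 := by
  rw [permGlue_lt n m hm α β i h]
  have := (α ⟨(i:ℕ), h⟩).isLt
  omega

lemma glue_val_high_bound (n m : ℕ) (hm : m ≤ n) (α : Equiv.Perm (Fin m))
    (β : Equiv.Perm (Fin (n-m))) (i : Fin (n+1)) (h : m < (i:ℕ)) :
    ((permGlue n m hm α β i) : ℕ) < n - m := by
  rw [permGlue_gt n m hm α β i h]
  exact (β _).isLt

lemma avoids_glue_iff (n m : ℕ) (hm : m ≤ n) (α : Equiv.Perm (Fin m))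
    (β : Equiv.Perm (Fin (n-m))) :
    Avoids132 (n+1) (permGlue n m hm α β) ↔ Avoids132 m α ∧ Avoids132 (n-m) β := by
  constructor
  · intro hav
    constructor
    · intro a b c hab hbc hpat
      have ha := a.isLt
      have hb := b.isLt
      have hc := c.isLt
      have hab' : (a:ℕ) < (b:ℕ) := Fin.lt_def.mp hab
      have hbc' : (b:ℕ) < (c:ℕ) := Fin.lt_def.mp hbc
      have h1 : ((α a : Fin m) : ℕ) < ((α c : Fin m) : ℕ) := Fin.lt_def.mp hpat.1
      have h2 : ((α c : Fin m) : ℕ) < ((α b : Fin m) : ℕ) := Fin.lt_def.mp hpat.2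
      have hva : ((permGlue n m hm α β ⟨(a:ℕ), by omega⟩ : Fin (n+1)) : ℕ) =
          (n - m) + ((α a : Fin m) : ℕ) := by
        rw [permGlue_lt n m hm α β _ (show ((⟨(a:ℕ), by omega⟩ : Fin (n+1)) : ℕ) < m from ha)]
      have hvb : ((permGlue n m hm α β ⟨(b:ℕ), by omega⟩ : Fin (n+1)) : ℕ) =
          (n - m) + ((α b : Fin m) : ℕ) := by
        rw [permGlue_lt n m hm α β _ (show ((⟨(b:ℕ), by omega⟩ : Fin (n+1)) : ℕ) < m from hb)]
      have hvc : ((permGlue n m hm α β ⟨(c:ℕ), by omega⟩ : Fin (n+1)) : ℕ) =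
          (n - m) + ((α c : Fin m) : ℕ) := by
        rw [permGlue_lt n m hm α β _ (show ((⟨(c:ℕ), by omega⟩ : Fin (n+1)) : ℕ) < m from hc)]
      refine hav ⟨(a:ℕ), by omega⟩ ⟨(b:ℕ), by omega⟩ ⟨(c:ℕ), by omega⟩ ?_ ?_ ⟨?_, ?_⟩
      · exact Fin.lt_def.mpr (show (a:ℕ) < (b:ℕ) from hab')
      · exact Fin.lt_def.mpr (show (b:ℕ) < (c:ℕ) from hbc')
      · exact Fin.lt_def.mpr (by omega)
      · exact Fin.lt_def.mpr (by omega)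
    · intro a b c hab hbc hpat
      have ha := a.isLt
      have hb := b.isLt
      have hc := c.isLt
      have hab' : (a:ℕ) < (b:ℕ) := Fin.lt_def.mp hab
      have hbc' : (b:ℕ) < (c:ℕ) := Fin.lt_def.mp hbc
      have h1 : ((β a : Fin (n-m)) : ℕ) < ((β c : Fin (n-m)) : ℕ) := Fin.lt_def.mp hpat.1
      have h2 : ((β c : Fin (n-m)) : ℕ) < ((β b : Fin (n-m)) : ℕ) := Fin.lt_def.mp hpat.2
      have hva : ((permGlue n m hm α β ⟨m+1+(a:ℕ), by omega⟩ : Fin (n+1)) : ℕ) =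
          ((β a : Fin (n-m)) : ℕ) := by
        rw [permGlue_gt n m hm α β _
          (show m < ((⟨m+1+(a:ℕ), by omega⟩ : Fin (n+1)) : ℕ) from by show m < m+1+(a:ℕ); omega)]
        first
        | rfl
        | (congr 2
           exact Fin.ext (show m+1+(a:ℕ) - (m+1) = (a:ℕ) from by omega))
        | (congr 1
           exact Fin.ext (show m+1+(a:ℕ) - (m+1) = (a:ℕ) from by omega))
      have hvb : ((permGlue n m hm α β ⟨m+1+(b:ℕ), by omega⟩ : Fin (n+1)) : ℕ) =
          ((β b : Fin (n-m)) : ℕ) := by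
        rw [permGlue_gt n m hm α β _
          (show m < ((⟨m+1+(b:ℕ), by omega⟩ : Fin (n+1)) : ℕ) from by show m < m+1+(b:ℕ); omega)]
        first
        | rfl
        | (congr 2
           exact Fin.ext (show m+1+(b:ℕ) - (m+1) = (b:ℕ) from by omega))
        | (congr 1
           exact Fin.ext (show m+1+(b:ℕ) - (m+1) = (b:ℕ) from by omega))
      have hvc : ((permGlue n m hm α β ⟨m+1+(c:ℕ), by omega⟩ : Fin (n+1)) : ℕ) =
          ((β c : Fin (n-m)) : ℕ) := by
        rw [permGlue_gt n m hm α β _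
          (show m < ((⟨m+1+(c:ℕ), by omega⟩ : Fin (n+1)) : ℕ) from by show m < m+1+(c:ℕ); omega)]
        first
        | rfl
        | (congr 2
           exact Fin.ext (show m+1+(c:ℕ) - (m+1) = (c:ℕ) from by omega))
        | (congr 1
           exact Fin.ext (show m+1+(c:ℕ) - (m+1) = (c:ℕ) from by omega))
      refine hav ⟨m+1+(a:ℕ), by omega⟩ ⟨m+1+(b:ℕ), by omega⟩ ⟨m+1+(c:ℕ), by omega⟩ ?_ ?_ ⟨?_, ?_⟩
      · exact Fin.lt_def.mpr (show m+1+(a:ℕ) < m+1+(b:ℕ) from by omega)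
      · exact Fin.lt_def.mpr (show m+1+(b:ℕ) < m+1+(c:ℕ) from by omega)
      · exact Fin.lt_def.mpr (by omega)
      · exact Fin.lt_def.mpr (by omega)
  · rintro ⟨hα, hβ⟩ i j k hij hjk ⟨h1, h2⟩
    have hi := i.isLt
    have hj := j.isLt
    have hk := k.isLt
    have hij' : (i:ℕ) < (j:ℕ) := hij
    have hjk' : (j:ℕ) < (k:ℕ) := hjk
    have h1' : ((permGlue n m hm α β i) : ℕ) < ((permGlue n m hm α β k) : ℕ) := h1
    have h2' : ((permGlue n m hm α β k) : ℕ) < ((permGlue n m hm α β j) : ℕ) := h2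
    rcases Nat.lt_trichotomy (k:ℕ) m with hkm | hkm | hkm
    · -- all three < m : use α
      have him : (i:ℕ) < m := by omega
      have hjm : (j:ℕ) < m := by omega
      refine hα ⟨(i:ℕ), him⟩ ⟨(j:ℕ), hjm⟩ ⟨(k:ℕ), hkm⟩ (Fin.mk_lt_mk.mpr hij')
        (Fin.mk_lt_mk.mpr hjk') ⟨?_, ?_⟩
      · rw [permGlue_lt n m hm α β i him, permGlue_lt n m hm α β k hkm] at h1'
        exact Fin.lt_def.mpr (by omega)
      · rw [permGlue_lt n m hm α β k hkm, permGlue_lt n m hm α β j hjm] at h2'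
        exact Fin.lt_def.mpr (by omega)
    · -- k at position m : value n, h2 impossible
      have hjm : (j:ℕ) < m := by omega
      rw [permGlue_eq n m hm α β k hkm] at h2'
      have := glue_val_low_bound n m hm α β j hjm
      omega
    · -- k > m
      rcases Nat.lt_trichotomy (j:ℕ) m with hjm | hjm | hjm
      · -- i,j < m, k > m : h1 impossible
        have him : (i:ℕ) < m := by omega
        have := glue_val_low_bound n m hm α β i him
        have := glue_val_high_bound n m hm α β k hkm
        omega
      · -- j at position m, i < m, k > m
        have him : (i:ℕ) < m := by omega
        have := glue_val_low_bound n m hm α β i him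
        have := glue_val_high_bound n m hm α β k hkm
        omega
      · -- j > m, k > m
        rcases Nat.lt_trichotomy (i:ℕ) m with him | him | him
        · have := glue_val_low_bound n m hm α β i him
          have := glue_val_high_bound n m hm α β k hkm
          omega
        · rw [permGlue_eq n m hm α β i him] at h1'
          have := (permGlue n m hm α β k).isLt
          omega
        · -- all > m : use β
          refine hβ ⟨(i:ℕ)-(m+1), by omega⟩ ⟨(j:ℕ)-(m+1), by omega⟩ ⟨(k:ℕ)-(m+1), by omega⟩
            (Fin.mk_lt_mk.mpr (by omega)) (Fin.mk_lt_mk.mpr (by omega)) ⟨?_, ?_⟩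
          · rw [permGlue_gt n m hm α β i him, permGlue_gt n m hm α β k hkm] at h1'
            exact Fin.lt_def.mpr h1'
          · rw [permGlue_gt n m hm α β k hkm, permGlue_gt n m hm α β j hjm] at h2'
            exact Fin.lt_def.mpr h2'

lemma perm_decomp (n : ℕ) (σ : Equiv.Perm (Fin (n+1))) (hav : Avoids132 (n+1) σ) :
    ∃ m : ℕ, ∃ hm : m ≤ n, ∃ α : Equiv.Perm (Fin m), ∃ β : Equiv.Perm (Fin (n-m)),
      σ = permGlue n m hm α β := by
  classical
  set M : Fin (n+1) := σ.symm ⟨n, by omega⟩ with hMdef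
  set m : ℕ := (M:ℕ) with hmdef
  have hm : m ≤ n := by have := M.isLt; omega
  have hσM : σ M = ⟨n, by omega⟩ := Equiv.apply_symm_apply σ _
  have hMval : ∀ j : Fin (n+1), (j:ℕ) ≠ m → ((σ j : Fin (n+1)) : ℕ) < n := by
    intro j hj
    have hne : σ j ≠ ⟨n, by omega⟩ := by
      intro hc
      apply hj
      have : j = M := by
        apply σ.injective
        rw [hσM, hc]
      rw [this]
    have h1 := (σ j).isLt
    have h2 : ((σ j : Fin (n+1)) : ℕ) ≠ n := fun hv => hne (Fin.ext hv)
    omega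
  have key : ∀ i j : Fin (n+1), (i:ℕ) < m → m < (j:ℕ) →
      ((σ j : Fin (n+1)) : ℕ) < ((σ i : Fin (n+1)) : ℕ) := by
    intro i j h1 h2
    have hij : i < M := Fin.lt_def.mpr h1
    have hMj : M < j := Fin.lt_def.mpr h2
    have hp := hav i M j hij hMj
    have hji : ((σ j : Fin (n+1)) : ℕ) < n := hMval j (by omega)
    have hMn : ((σ M : Fin (n+1)) : ℕ) = n := by rw [hσM]
    have hne : ((σ i : Fin (n+1)) : ℕ) ≠ ((σ j : Fin (n+1)) : ℕ) := by
      intro hv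
      have : i = j := σ.injective (Fin.ext hv)
      rw [this] at h1
      omega
    have hnover : ¬ (σ i < σ j) := fun hc => hp ⟨hc, Fin.lt_def.mpr (by omega)⟩
    have : ¬ ((σ i : Fin (n+1)) : ℕ) < ((σ j : Fin (n+1)) : ℕ) :=
      fun hc => hnover (Fin.lt_def.mpr hc)
    omega
  have hblock1 : ∀ i : Fin (n+1), (i:ℕ) < m → n - m ≤ ((σ i : Fin (n+1)) : ℕ) := by
    intro i hi
    have hcount : ((Finset.univ : Finset (Fin (n+1))).filter
        (fun j : Fin (n+1) => m+1 ≤ (j:ℕ))).card ≤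
        ((Finset.univ : Finset (Fin (n+1))).filter
        (fun v : Fin (n+1) => (v:ℕ) < ((σ i : Fin (n+1)) : ℕ))).card := by
      apply Finset.card_le_card_of_injOn σ
      · intro j hj
        simp only [Finset.mem_coe, Finset.mem_filter, Finset.mem_univ, true_and] at hj ⊢
        exact key i j hi (by omega)
      · intro x _ y _ hxy
        exact σ.injective hxy
    rw [card_filter_val_ge (n+1) (m+1) (by omega),
      card_filter_val_lt (n+1) _ (by have := (σ i).isLt; omega)] at hcount
    omega
  have hblock3 : ∀ j : Fin (n+1), m < (j:ℕ) → ((σ j : Fin (n+1)) : ℕ) < n - m := by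
    intro j hj
    have hcount : ((Finset.univ : Finset (Fin (n+1))).filter
        (fun i : Fin (n+1) => (i:ℕ) < m+1)).card ≤
        ((Finset.univ : Finset (Fin (n+1))).filter
        (fun v : Fin (n+1) => ((σ j : Fin (n+1)) : ℕ) + 1 ≤ (v:ℕ))).card := by
      apply Finset.card_le_card_of_injOn σ
      · intro i hi
        simp only [Finset.mem_coe, Finset.mem_filter, Finset.mem_univ, true_and] at hi ⊢
        rcases Nat.lt_or_ge (i:ℕ) m with him | him
        · have := key i j him hj
          omega
        · have him' : (i:ℕ) = m := by omega
          have : i = M := Fin.ext him'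
          rw [this, hσM]
          have := hMval j (by omega)
          simp only [Fin.val_mk]
          omega
      · intro x _ y _ hxy
        exact σ.injective hxy
    rw [card_filter_val_lt (n+1) (m+1) (by omega),
      card_filter_val_ge (n+1) _ (by have := (σ j).isLt; omega)] at hcount
    omega
  have hup : ∀ t : Fin m, ((σ ⟨(t:ℕ), by have := t.isLt; omega⟩ : Fin (n+1)) : ℕ) - (n-m) < m := by
    intro t
    have ht := t.isLt
    have h1 := hblock1 ⟨(t:ℕ), by omega⟩ (by exact ht)
    have h2 := hMval ⟨(t:ℕ), by omega⟩ (by show (t:ℕ) ≠ m; omega)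
    omega
  have hαinj : Function.Injective (fun t : Fin m =>
      (⟨((σ ⟨(t:ℕ), by have := t.isLt; omega⟩ : Fin (n+1)) : ℕ) - (n-m), hup t⟩ : Fin m)) := by
    intro t t' hteq
    simp only [Fin.mk.injEq] at hteq
    have h1 := hblock1 ⟨(t:ℕ), by have := t.isLt; omega⟩ (by exact t.isLt)
    have h2 := hblock1 ⟨(t':ℕ), by have := t'.isLt; omega⟩ (by exact t'.isLt)
    have hv : ((σ ⟨(t:ℕ), by have := t.isLt; omega⟩ : Fin (n+1)) : ℕ) =
        ((σ ⟨(t':ℕ), by have := t'.isLt; omega⟩ : Fin (n+1)) : ℕ) := by omega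
    have := σ.injective (Fin.ext hv)
    simp only [Fin.mk.injEq] at this
    exact Fin.ext this
  have hβlt : ∀ j : Fin (n-m), ((σ ⟨m+1+(j:ℕ), by have := j.isLt; omega⟩ : Fin (n+1)) : ℕ) < n - m := by
    intro j
    exact hblock3 _ (by show m < m+1+(j:ℕ); omega)
  have hβinj : Function.Injective (fun j : Fin (n-m) =>
      (⟨((σ ⟨m+1+(j:ℕ), by have := j.isLt; omega⟩ : Fin (n+1)) : ℕ), hβlt j⟩ : Fin (n-m))) := by
    intro j j' hjeq
    simp only [Fin.mk.injEq] at hjeq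
    have := σ.injective (Fin.ext hjeq)
    simp only [Fin.mk.injEq] at this
    exact Fin.ext (by omega)
  obtain ⟨α, hα⟩ : ∃ α : Equiv.Perm (Fin m), ∀ t : Fin m,
      ((α t : Fin m) : ℕ) =
        ((σ ⟨(t:ℕ), by have := t.isLt; omega⟩ : Fin (n+1)) : ℕ) - (n-m) :=
    ⟨Equiv.ofBijective _ ((Finite.injective_iff_bijective).mp hαinj), fun t => by
      simp only [Equiv.ofBijective_apply]⟩
  obtain ⟨β, hβ⟩ : ∃ β : Equiv.Perm (Fin (n-m)), ∀ j : Fin (n-m),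
      ((β j : Fin (n-m)) : ℕ) =
        ((σ ⟨m+1+(j:ℕ), by have := j.isLt; omega⟩ : Fin (n+1)) : ℕ) :=
    ⟨Equiv.ofBijective _ ((Finite.injective_iff_bijective).mp hβinj), fun j => by
      simp only [Equiv.ofBijective_apply]⟩
  refine ⟨m, hm, α, β, ?_⟩
  apply Equiv.ext
  intro i
  apply Fin.ext
  rcases Nat.lt_trichotomy (i:ℕ) m with hi | hi | hi
  · rw [permGlue_lt n m hm α β i hi, hα ⟨(i:ℕ), hi⟩]
    have hidx : (⟨(((⟨(i:ℕ), hi⟩ : Fin m)) : ℕ),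
        by have := (⟨(i:ℕ), hi⟩ : Fin m).isLt; omega⟩ : Fin (n+1)) = i := Fin.ext rfl
    rw [hidx]
    have := hblock1 i hi
    omega
  · rw [permGlue_eq n m hm α β i hi]
    have : i = M := Fin.ext hi
    rw [this, hσM]
  · rw [permGlue_gt n m hm α β i hi, hβ ⟨(i:ℕ) - (m+1), by have := i.isLt; omega⟩]
    have hidx : (⟨m+1+(((⟨(i:ℕ) - (m+1), by have := i.isLt; omega⟩ : Fin (n-m))) : ℕ),
        by have := (⟨(i:ℕ) - (m+1), by have := i.isLt; omega⟩ : Fin (n-m)).isLt; omega⟩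
        : Fin (n+1)) = i :=
      Fin.ext (by show m+1+((i:ℕ)-(m+1)) = (i:ℕ); omega)
    rw [hidx]

lemma permGlue_m_eq (n a b : ℕ) (hab : a < b) (han : a ≤ n) (hbn : b ≤ n)
    (γ : Equiv.Perm (Fin a)) (δ : Equiv.Perm (Fin (n-a)))
    (γ' : Equiv.Perm (Fin b)) (δ' : Equiv.Perm (Fin (n-b))) :
    permGlue n a han γ δ ≠ permGlue n b hbn γ' δ' := by
  intro heq
  have h1 := congrArg (fun (e : Equiv.Perm (Fin (n+1))) =>
    ((e ⟨a, by omega⟩ : Fin (n+1)) : ℕ)) heq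
  rw [permGlue_eq n a han γ δ ⟨a, by omega⟩ (by exact rfl)] at h1
  have h2 := glue_val_low_bound n b hbn γ' δ' ⟨a, by omega⟩ (by exact hab)
  omega

lemma permGlue_inj_same (n m : ℕ) (hm : m ≤ n)
    (α α' : Equiv.Perm (Fin m)) (β β' : Equiv.Perm (Fin (n-m)))
    (h : permGlue n m hm α β = permGlue n m hm α' β') : α = α' ∧ β = β' := by
  constructor
  · apply Equiv.ext
    intro t
    apply Fin.ext
    have ht := t.isLt
    have htn : (t:ℕ) < n + 1 := by omega
    have htm : ((⟨(t:ℕ), htn⟩ : Fin (n+1)) : ℕ) < m := ht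
    have h1 := congrArg (fun (e : Equiv.Perm (Fin (n+1))) =>
      ((e ⟨(t:ℕ), htn⟩ : Fin (n+1)) : ℕ)) h
    rw [permGlue_lt n m hm α β ⟨(t:ℕ), htn⟩ htm,
      permGlue_lt n m hm α' β' ⟨(t:ℕ), htn⟩ htm] at h1
    have hidx : (⟨(((⟨(t:ℕ), htn⟩ : Fin (n+1))) : ℕ), htm⟩ : Fin m) = t :=
      Fin.ext rfl
    rw [hidx] at h1
    omega
  · apply Equiv.ext
    intro j
    apply Fin.ext
    have hj := j.isLt
    have hjn : m+1+(j:ℕ) < n + 1 := by omega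
    have hjm : m < ((⟨m+1+(j:ℕ), hjn⟩ : Fin (n+1)) : ℕ) := by
      show m < m+1+(j:ℕ); omega
    have h1 := congrArg (fun (e : Equiv.Perm (Fin (n+1))) =>
      ((e ⟨m+1+(j:ℕ), hjn⟩ : Fin (n+1)) : ℕ)) h
    rw [permGlue_gt n m hm α β ⟨m+1+(j:ℕ), hjn⟩ hjm,
      permGlue_gt n m hm α' β' ⟨m+1+(j:ℕ), hjn⟩ hjm] at h1
    have hidx : (⟨(((⟨m+1+(j:ℕ), hjn⟩ : Fin (n+1))) : ℕ) - (m+1),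
        by show m+1+(j:ℕ)-(m+1) < n - m; omega⟩ : Fin (n-m)) = j :=
      Fin.ext (by show m+1+(j:ℕ)-(m+1) = (j:ℕ); omega)
    rw [hidx] at h1
    omega

lemma nat_card_sigma' {ι : Type} [Fintype ι] (g : ι → Type) [∀ i, Finite (g i)] :
    Nat.card (Σ i, g i) = ∑ i : ι, Nat.card (g i) := by
  classical
  letI := fun i => Fintype.ofFinite (g i)
  simp only [Nat.card_eq_fintype_card, Fintype.card_sigma]

lemma bcF_cond_glue (n k m : ℕ) (hm : m ≤ n) (hk : 1 ≤ k)
    (α : Equiv.Perm (Fin m)) (β : Equiv.Perm (Fin (n-m)))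
    (hα : ∀ i, bcF α i < k) (hβ : ∀ i, bcF β i < k - (m+1)) :
    ∀ i, bcF (permGlue n m hm α β) i < k := by
  intro i
  rcases Nat.lt_trichotomy (i:ℕ) m with hi | hi | hi
  · rw [bcF_glue_lt n m hm α β i hi]
    exact hα _
  · rw [bcF_glue_eq n m hm α β i hi]
    omega
  · rw [bcF_glue_gt n m hm α β i hi]
    have := hβ ⟨(i:ℕ) - (m+1), by have := i.isLt; omega⟩
    omega

lemma bcF_cond_unglue (n k m : ℕ) (hm : m ≤ n) (α : Equiv.Perm (Fin m))
    (β : Equiv.Perm (Fin (n-m)))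
    (h : ∀ i, bcF (permGlue n m hm α β) i < k) :
    (∀ i, bcF α i < k) ∧ (∀ i, bcF β i < k - (m+1)) := by
  constructor
  · intro t
    have ht := t.isLt
    have htn : (t:ℕ) < n + 1 := by omega
    have htm : ((⟨(t:ℕ), htn⟩ : Fin (n+1)) : ℕ) < m := ht
    have h1 := h ⟨(t:ℕ), htn⟩
    rw [bcF_glue_lt n m hm α β ⟨(t:ℕ), htn⟩ htm] at h1
    have hidx : (⟨(((⟨(t:ℕ), htn⟩ : Fin (n+1))) : ℕ), htm⟩ : Fin m) = t := Fin.ext rfl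
    rwa [hidx] at h1
  · intro j
    have hj := j.isLt
    have hjn : m+1+(j:ℕ) < n + 1 := by omega
    have hjm : m < ((⟨m+1+(j:ℕ), hjn⟩ : Fin (n+1)) : ℕ) := by
      show m < m+1+(j:ℕ); omega
    have h1 := h ⟨m+1+(j:ℕ), hjn⟩
    rw [bcF_glue_gt n m hm α β ⟨m+1+(j:ℕ), hjn⟩ hjm] at h1
    have hidx : (⟨(((⟨m+1+(j:ℕ), hjn⟩ : Fin (n+1))) : ℕ) - (m+1),
        by show m+1+(j:ℕ)-(m+1) < n - m; omega⟩ : Fin (n-m)) = j :=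
      Fin.ext (by show m+1+(j:ℕ)-(m+1) = (j:ℕ); omega)
    rw [hidx] at h1
    omega

set_option maxHeartbeats 1000000 in
lemma permRec (n k : ℕ) (hk : 1 ≤ k) :
    Nat.card {σ : Equiv.Perm (Fin (n+1)) | Avoids132 (n+1) σ ∧ ∀ i, bcF σ i < k} =
    ∑ m : Fin (n+1),
      (Nat.card {α : Equiv.Perm (Fin (m:ℕ)) | Avoids132 (m:ℕ) α ∧ ∀ i, bcF α i < k}) *
      (Nat.card {β : Equiv.Perm (Fin (n-(m:ℕ))) |
        Avoids132 (n-(m:ℕ)) β ∧ ∀ i, bcF β i < k - ((m:ℕ)+1)}) := by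
  classical
  set Fib : Fin (n+1) → Type := fun m =>
    ↥{α : Equiv.Perm (Fin (m:ℕ)) | Avoids132 (m:ℕ) α ∧ ∀ i, bcF α i < k} ×
    ↥{β : Equiv.Perm (Fin (n-(m:ℕ))) |
        Avoids132 (n-(m:ℕ)) β ∧ ∀ i, bcF β i < k - ((m:ℕ)+1)} with hFib
  have hmle : ∀ m : Fin (n+1), (m:ℕ) ≤ n := fun m => by have := m.isLt; omega
  have hG : Function.Bijective (fun x : Σ m : Fin (n+1), Fib m =>
      (⟨permGlue n (x.1:ℕ) (hmle x.1) x.2.1.1 x.2.2.1,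
        ⟨(avoids_glue_iff n (x.1:ℕ) (hmle x.1) x.2.1.1 x.2.2.1).mpr
          ⟨x.2.1.2.1, x.2.2.2.1⟩,
         bcF_cond_glue n k (x.1:ℕ) (hmle x.1) hk x.2.1.1 x.2.2.1 x.2.1.2.2 x.2.2.2.2⟩⟩ :
        ↥{σ : Equiv.Perm (Fin (n+1)) | Avoids132 (n+1) σ ∧ ∀ i, bcF σ i < k})) := by
    constructor
    · rintro ⟨m, ⟨α, hα⟩, ⟨β, hβ⟩⟩ ⟨m', ⟨α', hα'⟩, ⟨β', hβ'⟩⟩ h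
      have h' : permGlue n (m:ℕ) (hmle m) α β = permGlue n (m':ℕ) (hmle m') α' β' :=
        congrArg Subtype.val h
      have hmm : (m:ℕ) = (m':ℕ) := by
        by_contra hne
        rcases Nat.lt_or_ge (m:ℕ) (m':ℕ) with hlt | hge
        · exact permGlue_m_eq n (m:ℕ) (m':ℕ) hlt (hmle m) (hmle m') α β α' β' h'
        · exact permGlue_m_eq n (m':ℕ) (m:ℕ) (by omega) (hmle m') (hmle m) α' β' α β h'.symm
      have hmm' : m = m' := Fin.ext hmm
      subst hmm'
      obtain ⟨hαα, hββ⟩ := permGlue_inj_same n (m:ℕ) (hmle m) α α' β β' h'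
      subst hαα
      subst hββ
      rfl
    · rintro ⟨σ, hσ⟩
      obtain ⟨m, hm, α, β, hglue⟩ := perm_decomp n σ hσ.1
      have hav := hσ.1
      have hbc := hσ.2
      rw [hglue] at hav hbc
      have hab := (avoids_glue_iff n m hm α β).mp hav
      have hbc2 := bcF_cond_unglue n k m hm α β hbc
      have hmlt : m < n + 1 := by omega
      refine ⟨⟨⟨m, hmlt⟩, (⟨α, ⟨hab.1, hbc2.1⟩⟩, ⟨β, ⟨hab.2, hbc2.2⟩⟩)⟩, ?_⟩
      apply Subtype.ext
      show permGlue n m _ α β = σ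
      rw [hglue]
  rw [← Nat.card_eq_of_bijective _ hG, nat_card_sigma']
  refine Finset.sum_congr rfl (fun m _ => ?_)
  rw [hFib, Nat.card_prod]


lemma bc_eq_bcF {N : ℕ} (σ : Equiv.Perm (Fin N)) (i : Fin N) : bc σ i = bcF σ i :=
  bc_eq_filter σ i

lemma main_count (n : ℕ) : ∀ k : ℕ,
    Nat.card {f : Fin n → ℕ | NDParking n f ∧ ∀ i : Fin n, f i ≤ k} =
    Nat.card {σ : Equiv.Perm (Fin n) | Avoids132 n σ ∧ ∀ i, bcF σ i < k} := by
  induction n using Nat.strong_induction_on with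
  | _ n IH =>
    intro k
    rcases n with _ | n'
    ·
      have e1 : Nat.card {f : Fin 0 → ℕ | NDParking 0 f ∧ ∀ i : Fin 0, f i ≤ k} = 1 := by
        rw [Nat.card_eq_one_iff_unique]
        constructor
        · constructor
          rintro ⟨f, -⟩ ⟨g, -⟩
          apply Subtype.ext
          funext i
          exact i.elim0
        · exact ⟨⟨fun _ => 1, ⟨⟨fun a b _ => le_refl _, fun i => i.elim0⟩, fun i => i.elim0⟩⟩⟩
      have e2 : Nat.card {σ : Equiv.Perm (Fin 0) | Avoids132 0 σ ∧ ∀ i, bcF σ i < k} = 1 := by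
        rw [Nat.card_eq_one_iff_unique]
        constructor
        · constructor
          rintro ⟨σ, -⟩ ⟨τ, -⟩
          apply Subtype.ext
          apply Equiv.ext
          intro i
          exact i.elim0
        · exact ⟨⟨Equiv.refl _, ⟨fun i => i.elim0, fun i => i.elim0⟩⟩⟩
      rw [e1, e2]
    · rcases Nat.eq_zero_or_pos k with hk0 | hk
      · subst hk0
        have e1 : IsEmpty ↥{f : Fin (n'+1) → ℕ | NDParking (n'+1) f ∧ ∀ i : Fin (n'+1), f i ≤ 0} := by
          constructor
          rintro ⟨f, hf, hfk⟩
          have h1 := (hf.2 ⟨0, by omega⟩).1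
          have h2 := hfk ⟨0, by omega⟩
          omega
        have e2 : IsEmpty ↥{σ : Equiv.Perm (Fin (n'+1)) | Avoids132 (n'+1) σ ∧ ∀ i, bcF σ i < 0} := by
          constructor
          rintro ⟨σ, -, hσk⟩
          have := hσk ⟨0, by omega⟩
          omega
        rw [Nat.card_of_isEmpty, Nat.card_of_isEmpty]
      · rw [parkRec n' k hk, permRec n' k hk]
        refine Finset.sum_congr rfl (fun m _ => ?_)
        have hmn := m.isLt
        have hlt1 : (m:ℕ) < n' + 1 := by omega
        have hlt2 : n' - (m:ℕ) < n' + 1 := by omega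
        have h1 := IH (m:ℕ) hlt1 k
        have h2 := IH (n' - (m:ℕ)) hlt2 (k - ((m:ℕ)+1))
        rw [h1, h2]

/-- The number of non-decreasing parking functions of length `n` with all values at most
`k` equals the number of 132-avoiding permutations `σ` of `{1,…,n}` with
`mmp(0,k,0,0)(σ) = 0`. -/
theorem card_ndParking_le_eq_card_mmp0k00_zero (n k : ℕ) (hn : 1 ≤ n) (hk : 1 ≤ k) :
    Nat.card {f : Fin n → ℕ | NDParking n f ∧ ∀ i : Fin n, f i ≤ k} =
    Nat.card {σ : Equiv.Perm (Fin n) | Avoids132 n σ ∧ mmp n 0 k 0 0 σ = 0} := by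
  rw [main_count n k]
  have hset : {σ : Equiv.Perm (Fin n) | Avoids132 n σ ∧ ∀ i, bcF σ i < k} =
      {σ : Equiv.Perm (Fin n) | Avoids132 n σ ∧ mmp n 0 k 0 0 σ = 0} := by
    ext σ
    simp only [Set.mem_setOf_eq]
    constructor
    · rintro ⟨h1, h2⟩
      refine ⟨h1, (mmp_zero_iff n k σ).mpr ?_⟩
      intro i
      rw [bc_eq_bcF]
      exact h2 i
    · rintro ⟨h1, h2⟩
      refine ⟨h1, ?_⟩
      intro i
      rw [← bc_eq_bcF]
      exact (mmp_zero_iff n k σ).mp h2 i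
  rw [hset]
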